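/- In the setting of the three-circle configuration, the inner angle ϑ_i at the center of the disk of radius r_i satisfies ϑ_i → 0 as r_i → ∞, uniformly in r_j, r_k > 0 and uniformly for (Θ_i, Θ_j, Θ_k) in any compact subset K of [0,π)³ on which the configuration conditions hold. -/

import Mathlib

open Real

/-- Inverse hyperbolic cosine (for `x ≥ 1`). -/
noncomputable def arcosh (x : ℝ) : ℝ := Real.log (x + Real.sqrt (x ^ 2 - 1))

/-- Side length `l_i` of the triangle of centers, as a function of the radii and
the exterior intersection angle `Θi`. -/
noncomputable def sideLength (Θi rj rk : ℝ) : ℝ :=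
  _root_.arcosh (Real.cosh rj * Real.cosh rk + Real.cos Θi * Real.sinh rj * Real.sinh rk)

/-- Inner angle `ϑ_i` at the center of the disk of radius `ri`. -/
noncomputable def innerAngle (Θi Θj Θk ri rj rk : ℝ) : ℝ :=
  let li := sideLength Θi rj rk
  let lj := sideLength Θj rk ri
  let lk := sideLength Θk ri rj
  Real.arccos ((Real.cosh lj * Real.cosh lk - Real.cosh li) / (Real.sinh lj * Real.sinh lk))

lemma cosh_arcosh {x : ℝ} (hx : 1 ≤ x) : Real.cosh (_root_.arcosh x) = x := by
  have hs : Real.sqrt (x ^ 2 - 1) ^ 2 = x ^ 2 - 1 :=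
    Real.sq_sqrt (by nlinarith)
  have hsnn : 0 ≤ Real.sqrt (x ^ 2 - 1) := Real.sqrt_nonneg _
  have hpos : 0 < x + Real.sqrt (x ^ 2 - 1) := by linarith
  have hmul : (x + Real.sqrt (x ^ 2 - 1)) * (x - Real.sqrt (x ^ 2 - 1)) = 1 := by
    nlinarith [hs]
  have hinv : (x + Real.sqrt (x ^ 2 - 1))⁻¹ = x - Real.sqrt (x ^ 2 - 1) :=
    inv_eq_of_mul_eq_one_right hmul
  rw [_root_.arcosh, Real.cosh_eq, Real.exp_log hpos, Real.exp_neg, Real.exp_log hpos, hinv]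
  ring

lemma sinh_arcosh {x : ℝ} (hx : 1 ≤ x) : Real.sinh (_root_.arcosh x) = Real.sqrt (x ^ 2 - 1) := by
  have hs : Real.sqrt (x ^ 2 - 1) ^ 2 = x ^ 2 - 1 :=
    Real.sq_sqrt (by nlinarith)
  have hsnn : 0 ≤ Real.sqrt (x ^ 2 - 1) := Real.sqrt_nonneg _
  have hpos : 0 < x + Real.sqrt (x ^ 2 - 1) := by linarith
  have hmul : (x + Real.sqrt (x ^ 2 - 1)) * (x - Real.sqrt (x ^ 2 - 1)) = 1 := by
    nlinarith [hs]
  have hinv : (x + Real.sqrt (x ^ 2 - 1))⁻¹ = x - Real.sqrt (x ^ 2 - 1) :=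
    inv_eq_of_mul_eq_one_right hmul
  rw [_root_.arcosh, Real.sinh_eq, Real.exp_log hpos, Real.exp_neg, Real.exp_log hpos, hinv]
  ring

lemma le_cosh_of_one_le {x : ℝ} (hx : 1 ≤ x) : x ≤ Real.cosh x := by
  have h1 : x - 1 + 1 ≤ Real.exp (x - 1) := Real.add_one_le_exp (x - 1)
  have h2 : Real.exp x = Real.exp 1 * Real.exp (x - 1) := by
    rw [← Real.exp_add]; ring_nf
  have h3 : (2.7182818283 : ℝ) < Real.exp 1 := Real.exp_one_gt_d9
  have h4 : 0 < Real.exp (-x) := Real.exp_pos _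
  have h5 : 0 < Real.exp (x - 1) := Real.exp_pos _
  rw [Real.cosh_eq]
  nlinarith

lemma one_le_A {c rj rk : ℝ} (hc : -1 ≤ c) (hj : 0 < rj) (hk : 0 < rk) :
    1 ≤ Real.cosh rj * Real.cosh rk + c * Real.sinh rj * Real.sinh rk := by
  have h1 := Real.cosh_sub rj rk
  have h2 := Real.one_le_cosh (rj - rk)
  have h3 : 0 < Real.sinh rj * Real.sinh rk :=
    mul_pos (Real.sinh_pos_iff.mpr hj) (Real.sinh_pos_iff.mpr hk)
  nlinarith

lemma one_lt_A {c rj rk η : ℝ} (hη : 0 < η) (hc : η - 1 ≤ c) (hj : 0 < rj) (hk : 0 < rk) :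
    1 < Real.cosh rj * Real.cosh rk + c * Real.sinh rj * Real.sinh rk := by
  have h1 := Real.cosh_sub rj rk
  have h2 := Real.one_le_cosh (rj - rk)
  have h3 : 0 < Real.sinh rj * Real.sinh rk :=
    mul_pos (Real.sinh_pos_iff.mpr hj) (Real.sinh_pos_iff.mpr hk)
  nlinarith

lemma A_lb {c rj rk η : ℝ} (hη1 : η ≤ 1) (hc : η - 1 ≤ c) (hj : 0 < rj) (hk : 0 < rk) :
    η * (Real.cosh rj * Real.cosh rk) ≤
      Real.cosh rj * Real.cosh rk + c * Real.sinh rj * Real.sinh rk := by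
  have hSj : 0 < Real.sinh rj := Real.sinh_pos_iff.mpr hj
  have hSk : 0 < Real.sinh rk := Real.sinh_pos_iff.mpr hk
  have hCj : Real.sinh rj < Real.cosh rj := by
    have := Real.cosh_sub_sinh rj; have := Real.exp_pos (-rj); linarith
  have hCk : Real.sinh rk < Real.cosh rk := by
    have := Real.cosh_sub_sinh rk; have := Real.exp_pos (-rk); linarith
  nlinarith [mul_nonneg (by linarith : (0:ℝ) ≤ c - (η - 1)) (le_of_lt (mul_pos hSj hSk)),
    mul_nonneg (by linarith : (0:ℝ) ≤ 1 - η)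
      (by nlinarith : (0:ℝ) ≤ Real.cosh rj * Real.cosh rk - Real.sinh rj * Real.sinh rk)]

lemma A_ub {c rj rk : ℝ} (hc : c ≤ 1) (hj : 0 < rj) (hk : 0 < rk) :
    Real.cosh rj * Real.cosh rk + c * Real.sinh rj * Real.sinh rk ≤
      2 * (Real.cosh rj * Real.cosh rk) := by
  have hSj : 0 < Real.sinh rj := Real.sinh_pos_iff.mpr hj
  have hSk : 0 < Real.sinh rk := Real.sinh_pos_iff.mpr hk
  have hCj : Real.sinh rj < Real.cosh rj := by
    have := Real.cosh_sub_sinh rj; have := Real.exp_pos (-rj); linarith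
  have hCk : Real.sinh rk < Real.cosh rk := by
    have := Real.cosh_sub_sinh rk; have := Real.exp_pos (-rk); linarith
  nlinarith [mul_nonneg (by linarith : (0:ℝ) ≤ 1 - c) (le_of_lt (mul_pos hSj hSk))]

lemma sqrt_lt_sq {a b : ℝ} (ha : 0 ≤ a) (h : Real.sqrt a < b) : a < b ^ 2 := by
  nlinarith [Real.sq_sqrt ha, Real.sqrt_nonneg a]

lemma one_lt_sq_sub_one {a : ℝ} (h : 1 < a) : 0 < a ^ 2 - 1 := by nlinarith

lemma main_est {δ η ai aj ak Ci Cj Ck : ℝ}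
    (hδ : 0 < δ) (hη : 0 < η)
    (hCi : 1 ≤ Ci) (hCj : 1 ≤ Cj) (hCk : 1 ≤ Ck)
    (hkey : 2 < δ * (η ^ 2 * Ci ^ 2))
    (h_aj_lb : η * (Ck * Ci) ≤ aj) (h_ak_lb : η * (Ci * Cj) ≤ ak)
    (h_ai_ub : ai ≤ 2 * (Cj * Ck)) :
    ai < δ * (aj * ak) := by
  have hCi0 : 0 < Ci := by linarith
  have hCj0 : 0 < Cj := by linarith
  have hCk0 : 0 < Ck := by linarith
  have hA : 0 ≤ η * (Ck * Ci) := by positivity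
  have hB : 0 ≤ η * (Ci * Cj) := by positivity
  have h1 : η * (Ck * Ci) * (η * (Ci * Cj)) ≤ aj * ak :=
    mul_le_mul h_aj_lb h_ak_lb hB (le_trans hA h_aj_lb)
  have h2 : δ * (η * (Ck * Ci) * (η * (Ci * Cj))) ≤ δ * (aj * ak) :=
    mul_le_mul_of_nonneg_left h1 hδ.le
  have h3 : δ * (η * (Ck * Ci) * (η * (Ci * Cj))) = δ * (η ^ 2 * Ci ^ 2) * (Cj * Ck) := by
    ring
  rw [h3] at h2
  have h4 : 2 * (Cj * Ck) < δ * (η ^ 2 * Ci ^ 2) * (Cj * Ck) :=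
    mul_lt_mul_of_pos_right hkey (mul_pos hCj0 hCk0)
  linarith

set_option maxHeartbeats 1000000 in
theorem innerAngle_tendsto_zero_uniformly
    (K : Set (ℝ × ℝ × ℝ)) (hK : IsCompact K)
    (hKsub : K ⊆ {Θ : ℝ × ℝ × ℝ |
      Θ.1 ∈ Set.Ico 0 π ∧ Θ.2.1 ∈ Set.Ico 0 π ∧ Θ.2.2 ∈ Set.Ico 0 π ∧
      ((Θ.1 + Θ.2.1 + Θ.2.2 ≤ π) ∨
        (Θ.1 + Θ.2.1 < π + Θ.2.2 ∧ Θ.2.1 + Θ.2.2 < π + Θ.1 ∧ Θ.2.2 + Θ.1 < π + Θ.2.1))}) :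
    ∀ ε > 0, ∃ R : ℝ, ∀ ri rj rk Θi Θj Θk : ℝ,
      R < ri → 0 < rj → 0 < rk → (Θi, Θj, Θk) ∈ K →
      innerAngle Θi Θj Θk ri rj rk < ε := by
  intro ε hε
  rcases K.eq_empty_or_nonempty with hKe | hKne
  · exact ⟨0, fun ri rj rk Θi Θj Θk _ _ _ hmem =>
      absurd hmem (by simp [hKe])⟩
  -- set up ε'
  have hπ : (3 : ℝ) < π := Real.pi_gt_three
  set ε' : ℝ := min ε 1 with hε'def
  have hε'pos : 0 < ε' := lt_min hε one_pos
  have hε'le : ε' ≤ ε := min_le_left _ _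
  have hε'le1 : ε' ≤ 1 := min_le_right _ _
  have hcosε'lt1 : Real.cos ε' < 1 := by
    have := Real.cos_lt_cos_of_nonneg_of_le_pi (le_refl (0:ℝ)) (by linarith) hε'pos
    simpa using this
  have hcosε'pos : 0 < Real.cos ε' :=
    Real.cos_pos_of_mem_Ioo ⟨by linarith, by linarith⟩
  set δ : ℝ := 1 - Real.cos ε' with hδdef
  have hδpos : 0 < δ := by simp only [hδdef]; linarith
  have hδle1 : δ ≤ 1 := by simp only [hδdef]; linarith
  -- compactness: uniform lower bound on the cosines
  set f : ℝ × ℝ × ℝ → ℝ :=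
    fun p => min (Real.cos p.1) (min (Real.cos p.2.1) (Real.cos p.2.2)) with hfdef
  have hfcont : ContinuousOn f K := by
    apply Continuous.continuousOn
    fun_prop
  obtain ⟨p₀, hp₀K, hmin⟩ := hK.exists_isMinOn hKne hfcont
  obtain ⟨h1, h2, h3, -⟩ := hKsub hp₀K
  have hc1 : -1 < Real.cos p₀.1 := by
    have := Real.cos_lt_cos_of_nonneg_of_le_pi h1.1 (le_refl π) h1.2
    simpa using this
  have hc2 : -1 < Real.cos p₀.2.1 := by
    have := Real.cos_lt_cos_of_nonneg_of_le_pi h2.1 (le_refl π) h2.2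
    simpa using this
  have hc3 : -1 < Real.cos p₀.2.2 := by
    have := Real.cos_lt_cos_of_nonneg_of_le_pi h3.1 (le_refl π) h3.2
    simpa using this
  have hfp₀ : -1 < f p₀ := by
    simp only [hfdef, lt_min_iff]
    exact ⟨hc1, hc2, hc3⟩
  set η : ℝ := min (1 + f p₀) 1 with hηdef
  have hηpos : 0 < η := lt_min (by linarith) one_pos
  have hηle1 : η ≤ 1 := min_le_right _ _
  have hηbd : ∀ {Θi Θj Θk : ℝ}, (Θi, Θj, Θk) ∈ K →
      η - 1 ≤ Real.cos Θi ∧ η - 1 ≤ Real.cos Θj ∧ η - 1 ≤ Real.cos Θk := by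
    intro Θi Θj Θk hmem
    have hm : f p₀ ≤ f (Θi, Θj, Θk) := isMinOn_iff.mp hmin _ hmem
    have hη' : η ≤ 1 + f p₀ := min_le_left _ _
    simp only [hfdef] at hm
    refine ⟨?_, ?_, ?_⟩
    · have := le_trans hm (min_le_left _ _); linarith
    · have := le_trans hm (le_trans (min_le_right _ _) (min_le_left _ _)); linarith
    · have := le_trans hm (le_trans (min_le_right _ _) (min_le_right _ _)); linarith
  -- choose R
  refine ⟨max 1 (Real.sqrt (2 / δ) / η), ?_⟩
  intro ri rj rk Θi Θj Θk hRi hrj hrk hmem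
  have hri1 : 1 < ri := lt_of_le_of_lt (le_max_left _ _) hRi
  have hri0 : 0 < ri := by linarith
  have hCi_ge : ri ≤ Real.cosh ri := le_cosh_of_one_le (le_of_lt hri1)
  have hCi_big : Real.sqrt (2 / δ) / η < Real.cosh ri :=
    lt_of_le_of_lt (le_max_right _ _) (lt_of_lt_of_le hRi hCi_ge)
  have hsqrtnn : 0 ≤ Real.sqrt (2 / δ) := Real.sqrt_nonneg _
  have hsq : Real.sqrt (2 / δ) ^ 2 = 2 / δ := Real.sq_sqrt (by positivity)
  have hkey : 2 < δ * (η ^ 2 * Real.cosh ri ^ 2) := by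
    have h1 : Real.sqrt (2 / δ) < η * Real.cosh ri := by
      rw [div_lt_iff₀ hηpos] at hCi_big; linarith [hCi_big]
    have h2 : 2 / δ < (η * Real.cosh ri) ^ 2 := sqrt_lt_sq (by positivity) h1
    rw [div_lt_iff₀ hδpos] at h2
    have h3 : (η * Real.cosh ri) ^ 2 * δ = δ * (η ^ 2 * Real.cosh ri ^ 2) := by ring
    linarith
  -- cosine bounds
  obtain ⟨hci_ge, hcj_ge, hck_ge⟩ := hηbd hmem
  have hci_le : Real.cos Θi ≤ 1 := Real.cos_le_one _
  have hcj_le : Real.cos Θj ≤ 1 := Real.cos_le_one _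
  have hck_le : Real.cos Θk ≤ 1 := Real.cos_le_one _
  -- hyperbolic quantities
  have hSi : 0 < Real.sinh ri := Real.sinh_pos_iff.mpr hri0
  have hSj : 0 < Real.sinh rj := Real.sinh_pos_iff.mpr hrj
  have hSk : 0 < Real.sinh rk := Real.sinh_pos_iff.mpr hrk
  have hCi1 : 1 ≤ Real.cosh ri := Real.one_le_cosh ri
  have hCj1 : 1 ≤ Real.cosh rj := Real.one_le_cosh rj
  have hCk1 : 1 ≤ Real.cosh rk := Real.one_le_cosh rk
  set ai : ℝ := Real.cosh rj * Real.cosh rk + Real.cos Θi * Real.sinh rj * Real.sinh rk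
    with hai_def
  set aj : ℝ := Real.cosh rk * Real.cosh ri + Real.cos Θj * Real.sinh rk * Real.sinh ri
    with haj_def
  set ak : ℝ := Real.cosh ri * Real.cosh rj + Real.cos Θk * Real.sinh ri * Real.sinh rj
    with hak_def
  have h_ai1 : 1 ≤ ai := one_le_A (by linarith) hrj hrk
  have h_aj1 : 1 < aj := one_lt_A hηpos hcj_ge hrk hri0
  have h_ak1 : 1 < ak := one_lt_A hηpos hck_ge hri0 hrj
  have h_aj_lb : η * (Real.cosh rk * Real.cosh ri) ≤ aj := A_lb hηle1 hcj_ge hrk hri0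
  have h_ak_lb : η * (Real.cosh ri * Real.cosh rj) ≤ ak := A_lb hηle1 hck_ge hri0 hrj
  have h_ai_ub : ai ≤ 2 * (Real.cosh rj * Real.cosh rk) := A_ub hci_le hrj hrk
  -- rewrite the inner angle
  have e1 : Real.cosh (sideLength Θi rj rk) = ai := by
    rw [sideLength]; exact _root_.cosh_arcosh h_ai1
  have e2 : Real.cosh (sideLength Θj rk ri) = aj := by
    rw [sideLength]; exact _root_.cosh_arcosh (le_of_lt h_aj1)
  have e3 : Real.cosh (sideLength Θk ri rj) = ak := by
    rw [sideLength]; exact _root_.cosh_arcosh (le_of_lt h_ak1)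
  have s2 : Real.sinh (sideLength Θj rk ri) = Real.sqrt (aj ^ 2 - 1) := by
    rw [sideLength]; exact _root_.sinh_arcosh (le_of_lt h_aj1)
  have s3 : Real.sinh (sideLength Θk ri rj) = Real.sqrt (ak ^ 2 - 1) := by
    rw [sideLength]; exact _root_.sinh_arcosh (le_of_lt h_ak1)
  have hgoal : innerAngle Θi Θj Θk ri rj rk =
      Real.arccos ((aj * ak - ai) / (Real.sqrt (aj ^ 2 - 1) * Real.sqrt (ak ^ 2 - 1))) := by
    simp only [innerAngle]
    rw [e1, e2, e3, s2, s3]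
  rw [hgoal]
  -- denominator bounds
  have hsqj_pos : 0 < Real.sqrt (aj ^ 2 - 1) := Real.sqrt_pos.mpr (one_lt_sq_sub_one h_aj1)
  have hsqk_pos : 0 < Real.sqrt (ak ^ 2 - 1) := Real.sqrt_pos.mpr (one_lt_sq_sub_one h_ak1)
  have hsqj_le : Real.sqrt (aj ^ 2 - 1) ≤ aj := by
    calc Real.sqrt (aj ^ 2 - 1) ≤ Real.sqrt (aj ^ 2) := Real.sqrt_le_sqrt (by linarith)
    _ = aj := by rw [Real.sqrt_sq (by linarith)]
  have hsqk_le : Real.sqrt (ak ^ 2 - 1) ≤ ak := by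
    calc Real.sqrt (ak ^ 2 - 1) ≤ Real.sqrt (ak ^ 2) := Real.sqrt_le_sqrt (by linarith)
    _ = ak := by rw [Real.sqrt_sq (by linarith)]
  have hD : 0 < Real.sqrt (aj ^ 2 - 1) * Real.sqrt (ak ^ 2 - 1) := mul_pos hsqj_pos hsqk_pos
  have hNpos : ai < δ * (aj * ak) :=
    main_est hδpos hηpos hCi1 hCj1 hCk1 hkey h_aj_lb h_ak_lb h_ai_ub
  -- cos ε' < x
  set x : ℝ := (aj * ak - ai) / (Real.sqrt (aj ^ 2 - 1) * Real.sqrt (ak ^ 2 - 1)) with hxdef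
  have hx : Real.cos ε' < x := by
    rw [hxdef, lt_div_iff₀ hD]
    have hDle : Real.sqrt (aj ^ 2 - 1) * Real.sqrt (ak ^ 2 - 1) ≤ aj * ak :=
      mul_le_mul hsqj_le hsqk_le (le_of_lt hsqk_pos) (by linarith)
    have h1 : Real.cos ε' * (Real.sqrt (aj ^ 2 - 1) * Real.sqrt (ak ^ 2 - 1)) ≤
        Real.cos ε' * (aj * ak) :=
      mul_le_mul_of_nonneg_left hDle (le_of_lt hcosε'pos)
    have h2 : Real.cos ε' * (aj * ak) < aj * ak - ai := by
      have hc : Real.cos ε' = 1 - δ := by simp only [hδdef]; ring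
      have hexp : (1 - δ) * (aj * ak) = aj * ak - δ * (aj * ak) := by ring
      rw [hc, hexp]
      linarith [hNpos]
    linarith
  rcases le_or_gt 1 x with h1 | h1
  · rw [Real.arccos_eq_zero.mpr h1]; exact hε
  · have hxge : -1 ≤ x := le_trans (Real.neg_one_le_cos ε') (le_of_lt hx)
    by_contra hcon
    push_neg at hcon
    have h2 : Real.cos (Real.arccos x) ≤ Real.cos ε' :=
      Real.cos_le_cos_of_nonneg_of_le_pi (le_of_lt hε'pos) (Real.arccos_le_pi x)
        (le_trans hε'le hcon)
    rw [Real.cos_arccos hxge (le_of_lt h1)] at h2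
    linarith
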